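/- (Inverse of the generalized convolution operator) Let Q : ℤ → ℂ be absolutely summable with F{Q}(f) ≠ 0 for all f, and suppose δt²/F{Q} is the DTFT of some absolutely summable Q⁻ : ℤ → ℂ. Then for every absolutely summable X : ℤ × Fin p → ℂ, Q⁻ ∗ (Q ∗ X) = X and Q ∗ (Q⁻ ∗ X) = X. -/

import Mathlib

open MeasureTheory

/-- The complex exponential `e^{-2πix}`. -/
noncomputable def cexp (x : ℝ) : ℂ := Complex.exp (-2 * Real.pi * x * Complex.I)

lemma cexp_add (x y : ℝ) : cexp (x + y) = cexp x * cexp y := by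
  rw [cexp, cexp, cexp, ← Complex.exp_add]; push_cast; ring_nf

lemma norm_cexp (x : ℝ) : ‖cexp x‖ = 1 := by
  rw [cexp]
  rw [show (-2 * ↑Real.pi * ↑x * Complex.I : ℂ) = ((-2 * Real.pi * x : ℝ) : ℂ) * Complex.I by push_cast; ring]
  simp [Complex.norm_exp]

lemma continuous_cexp_aux (a : ℝ) : Continuous fun f : ℝ => cexp (a * f) := by
  unfold cexp
  exact Complex.continuous_exp.comp (by continuity)

lemma integral_cexp {δt : ℝ} (hδt : 0 < δt) (m : ℤ) :
    ∫ f in (0:ℝ)..(1/δt), cexp (m * f * δt) = if m = 0 then ((1/δt : ℝ) : ℂ) else 0 := by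
  rcases eq_or_ne m 0 with hm | hm
  · simp [hm, cexp]
  · have hc : ((-2 : ℂ) * Real.pi * m * δt * Complex.I) ≠ 0 := by
      simp [Real.pi_ne_zero, hδt.ne', Complex.I_ne_zero, Int.cast_eq_zero, hm, sub_eq_zero]
    have heq : ∀ f : ℝ, cexp (m * f * δt) = Complex.exp (((-2 : ℂ) * Real.pi * m * δt * Complex.I) * f) := by
      intro f; rw [cexp]; push_cast; ring_nf
    simp only [heq]
    rw [integral_exp_mul_complex hc]
    have h1 : ((-2 : ℂ) * Real.pi * m * δt * Complex.I) * ((1/δt : ℝ) : ℂ) = (-m : ℤ) * (2 * Real.pi * Complex.I) := by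
      have : (δt : ℂ) ≠ 0 := by exact_mod_cast hδt.ne'
      push_cast
      field_simp
    rw [h1, Complex.exp_int_mul_two_pi_mul_I]
    simp [hm]

/-- The Discrete Time Fourier Transform of a summable `G : ℤ → ℂ`. -/
noncomputable def dtft (δt : ℝ) (G : ℤ → ℂ) (f : ℝ) : ℂ :=
  (δt : ℂ) * ∑' k : ℤ, G k * cexp (k * f * δt)

lemma dirac_of_const {δt : ℝ} (hδt : 0 < δt) (S : ℤ → ℂ)
    (hS : Summable fun k => ‖S k‖) (c : ℂ)
    (h : ∀ f : ℝ, ∑' k : ℤ, S k * cexp (k * f * δt) = c) (n : ℤ) :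
    S n = if n = 0 then c else 0 := by
  have hT : (0:ℝ) < 1/δt := by positivity
  -- the integrand family
  set F : ℤ → ℝ → ℂ := fun k f => S k * cexp ((k - n) * f * δt) with hF
  have hFc : ∀ k, Continuous (F k) := by
    intro k
    have := (continuous_cexp_aux (((k : ℝ) - n) * δt)).const_smul (S k)
    simpa [hF, Pi.smul_def, smul_eq_mul, mul_comm, mul_assoc, mul_left_comm] using this
  have hμ : (volume (Set.Ioc (0:ℝ) (1/δt))).toReal = 1/δt := by
    simp [Real.volume_Ioc, hT.le, hδt.le]
  have hFint : ∀ k : ℤ, Integrable (F k) (volume.restrict (Set.Ioc (0:ℝ) (1/δt))) := by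
    intro k
    refine Integrable.mono' (g := fun _ => ‖S k‖) ?_ ((hFc k).aestronglyMeasurable) ?_
    · exact integrable_const _
    · filter_upwards with f
      rw [hF]; simp only []; rw [norm_mul, norm_cexp, mul_one]
  have hFnorm : ∀ k : ℤ, (∫ f in Set.Ioc (0:ℝ) (1/δt), ‖F k f‖) = ‖S k‖ * (1/δt) := by
    intro k
    have : ∀ f : ℝ, ‖F k f‖ = ‖S k‖ := by
      intro f; rw [hF]; simp only []; rw [norm_mul, norm_cexp, mul_one]
    simp only [this]
    rw [setIntegral_const, measureReal_def, hμ, smul_eq_mul]; ring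
  have hsum : Summable fun k : ℤ => ∫ f in Set.Ioc (0:ℝ) (1/δt), ‖F k f‖ := by
    simp only [hFnorm]; exact hS.mul_right _
  have swap := integral_tsum_of_summable_integral_norm (μ := volume.restrict (Set.Ioc (0:ℝ) (1/δt))) hFint hsum
  -- compute LHS of swap
  have hL : ∀ k : ℤ, (∫ f in Set.Ioc (0:ℝ) (1/δt), F k f) = S k * (if k = n then ((1/δt : ℝ) : ℂ) else 0) := by
    intro k
    rw [← intervalIntegral.integral_of_le hT.le]
    rw [hF]
    simp only
    rw [intervalIntegral.integral_const_mul]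
    have : ∀ f : ℝ, cexp (((k:ℝ) - n) * f * δt) = cexp (((k - n : ℤ) : ℝ) * f * δt) := by
      intro f; push_cast; ring_nf
    simp only [this]
    rw [integral_cexp hδt (k - n)]
    congr 1
    simp [sub_eq_zero]
  have hLsum : ∑' k : ℤ, (∫ f in Set.Ioc (0:ℝ) (1/δt), F k f) = S n * ((1/δt : ℝ) : ℂ) := by
    simp only [hL]
    rw [tsum_eq_single n]
    · simp
    · intro k hk; simp [hk]
  -- compute RHS of swap
  have hptwise : ∀ f : ℝ, (∑' k : ℤ, F k f) = c * cexp ((-n : ℝ) * f * δt) := by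
    intro f
    have : ∀ k : ℤ, F k f = (S k * cexp (k * f * δt)) * cexp ((-n : ℝ) * f * δt) := by
      intro k
      rw [hF]
      simp only
      rw [mul_assoc (S k), ← cexp_add]
      congr 2
      ring
    simp only [this]
    rw [tsum_mul_right, h f]
  have hRsum : (∫ f in Set.Ioc (0:ℝ) (1/δt), ∑' k : ℤ, F k f) = c * (if n = 0 then ((1/δt:ℝ):ℂ) else 0) := by
    simp only [hptwise]
    rw [← intervalIntegral.integral_of_le hT.le, intervalIntegral.integral_const_mul]
    have : ∀ f : ℝ, cexp ((-n : ℝ) * f * δt) = cexp (((-n : ℤ) : ℝ) * f * δt) := by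
      intro f; push_cast; ring_nf
    simp only [this]
    rw [integral_cexp hδt (-n)]
    congr 1
    simp [neg_eq_zero]
  rw [hLsum, hRsum] at swap
  have hδtC : ((1/δt : ℝ) : ℂ) ≠ 0 := by
    simp [hδt.ne']
  rcases eq_or_ne n 0 with hn | hn
  · simp only [hn, if_pos rfl] at swap ⊢
    exact mul_right_cancel₀ hδtC swap
  · simp only [if_neg hn, mul_zero] at swap ⊢
    exact (mul_eq_zero.mp swap).resolve_right hδtC

/-- the shear equivalence `(k, i) ↦ (k - i, i)` -/
def shear : ℤ × ℤ ≃ ℤ × ℤ where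
  toFun p := (p.1 - p.2, p.2)
  invFun p := (p.1 + p.2, p.2)
  left_inv p := by simp
  right_inv p := by simp

lemma summable_shear {A B : ℤ → ℂ} (hA : Summable fun k => ‖A k‖)
    (hB : Summable fun k => ‖B k‖) :
    Summable fun p : ℤ × ℤ => ‖A (p.1 - p.2)‖ * ‖B p.2‖ := by
  have h := hA.mul_of_nonneg hB (fun _ => norm_nonneg _) (fun _ => norm_nonneg _)
  exact (Equiv.summable_iff shear).mpr h

lemma summable_fiber {A B : ℤ → ℂ} (hA : Summable fun k => ‖A k‖)
    (hB : Summable fun k => ‖B k‖) (k : ℤ) :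
    Summable fun i : ℤ => ‖A (k - i)‖ * ‖B i‖ := by
  refine Summable.of_nonneg_of_le (fun i => mul_nonneg (norm_nonneg _) (norm_nonneg _))
    (fun i => ?_) (hB.mul_left (∑' m, ‖A m‖))
  exact mul_le_mul_of_nonneg_right (Summable.le_tsum hA _ fun _ _ => norm_nonneg _) (norm_nonneg _)

lemma summable_conv_norm {A B : ℤ → ℂ} (hA : Summable fun k => ‖A k‖)
    (hB : Summable fun k => ‖B k‖) :
    Summable fun k : ℤ => ‖∑' i : ℤ, A (k - i) * B i‖ := by
  have hD : Summable fun k : ℤ => ∑' i : ℤ, ‖A (k - i)‖ * ‖B i‖ := by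
    have h := summable_shear hA hB
    exact (h.hasSum.prod_fiberwise (fun k => (h.prod_factor k).hasSum)).summable
  refine Summable.of_nonneg_of_le (fun _ => norm_nonneg _) (fun k => ?_) hD
  calc ‖∑' i : ℤ, A (k - i) * B i‖ ≤ ∑' i : ℤ, ‖A (k - i) * B i‖ :=
        norm_tsum_le_tsum_norm ((summable_fiber hA hB k).congr (fun i => (norm_mul _ _).symm))
    _ = ∑' i : ℤ, ‖A (k - i)‖ * ‖B i‖ := by simp [norm_mul]

/-- Cauchy product for the DTFT sums. -/
lemma cauchyProductDTFT {A B : ℤ → ℂ} (hA : Summable fun k => ‖A k‖)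
    (hB : Summable fun k => ‖B k‖) (δt f : ℝ) :
    (∑' i : ℤ, A i * cexp (i * f * δt)) * (∑' j : ℤ, B j * cexp (j * f * δt)) =
      ∑' k : ℤ, (∑' i : ℤ, A (k - i) * B i) * cexp (k * f * δt) := by
  have hA' : Summable fun i : ℤ => ‖A i * cexp (i * f * δt)‖ := by
    refine hA.congr fun i => ?_
    rw [norm_mul, norm_cexp, mul_one]
  have hB' : Summable fun j : ℤ => ‖B j * cexp (j * f * δt)‖ := by
    refine hB.congr fun j => ?_
    rw [norm_mul, norm_cexp, mul_one]
  rw [tsum_mul_tsum_of_summable_norm hA' hB']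
  -- reindex by shear
  have hre := (Equiv.tsum_eq (α := ℂ) shear
    (fun z : ℤ × ℤ => (A z.1 * cexp (z.1 * f * δt)) * (B z.2 * cexp (z.2 * f * δt))))
  rw [← hre]
  have hterm : ∀ p : ℤ × ℤ,
      (A (p.1 - p.2) * cexp ((p.1 - p.2 : ℤ) * f * δt)) * (B p.2 * cexp (p.2 * f * δt)) =
        A (p.1 - p.2) * B p.2 * cexp (p.1 * f * δt) := by
    intro p
    rw [mul_mul_mul_comm, ← cexp_add]
    congr 2
    push_cast
    ring
  calc ∑' p : ℤ × ℤ, (A (shear p).1 * cexp ((shear p).1 * f * δt)) *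
          (B (shear p).2 * cexp ((shear p).2 * f * δt))
      = ∑' p : ℤ × ℤ, A (p.1 - p.2) * B p.2 * cexp (p.1 * f * δt) := by
        refine tsum_congr fun p => ?_
        simpa [shear] using hterm p
    _ = ∑' k : ℤ, ∑' i : ℤ, A (k - i) * B i * cexp (k * f * δt) := by
        refine Summable.tsum_prod' ?_ ?_
        · apply Summable.of_norm
          refine Summable.of_nonneg_of_le (fun _ => norm_nonneg _) (fun p => ?_) (summable_shear hA hB)
          rw [norm_mul, norm_mul, norm_cexp, mul_one]
        · intro k
          apply Summable.of_norm
          refine Summable.of_nonneg_of_le (fun _ => norm_nonneg _) (fun i => ?_) (summable_fiber hA hB k)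
          rw [norm_mul, norm_mul, norm_cexp, mul_one]
    _ = ∑' k : ℤ, (∑' i : ℤ, A (k - i) * B i) * cexp (k * f * δt) := by
        refine tsum_congr fun k => ?_
        rw [tsum_mul_right]

lemma conv_comm {A B : ℤ → ℂ} (k : ℤ) :
    (∑' i : ℤ, A (k - i) * B i) = ∑' i : ℤ, B (k - i) * A i := by
  have := Equiv.tsum_eq (α := ℂ) (Equiv.subLeft k) (fun i => A (k - i) * B i)
  rw [← this]
  refine tsum_congr fun i => ?_
  simp [Equiv.subLeft, mul_comm]

lemma apply_conv {A B : ℤ → ℂ} (hA : Summable fun k => ‖A k‖)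
    (hB : Summable fun k => ‖B k‖)
    (hAB : ∀ k : ℤ, (∑' i : ℤ, A (k - i) * B i) = if k = 0 then 1 else 0)
    (Y : ℤ → ℂ) (hY : Summable fun k => ‖Y k‖) (k : ℤ) :
    (∑' i : ℤ, A (k - i) * ∑' j : ℤ, B (i - j) * Y j) = Y k := by
  -- bound for A
  set CA : ℝ := ∑' m : ℤ, ‖A m‖ with hCA
  have hAbd : ∀ m : ℤ, ‖A m‖ ≤ CA := fun m => Summable.le_tsum hA m fun _ _ => norm_nonneg _
  -- the double-sum function
  set G : ℤ × ℤ → ℂ := fun p => A (k - p.1) * (B (p.1 - p.2) * Y p.2) with hG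
  have hGsum : Summable G := by
    apply Summable.of_norm
    have hmaj : Summable fun p : ℤ × ℤ => CA * (‖B (p.1 - p.2)‖ * ‖Y p.2‖) :=
      (summable_shear hB hY).mul_left CA
    refine Summable.of_nonneg_of_le (fun _ => norm_nonneg _) (fun p => ?_) hmaj
    rw [hG]
    simp only [norm_mul]
    exact mul_le_mul_of_nonneg_right (hAbd _)
      (mul_nonneg (norm_nonneg _) (norm_nonneg _))
  have hfib1 : ∀ i : ℤ, Summable fun j : ℤ => G (i, j) := by
    intro i
    apply Summable.of_norm
    have : Summable fun j : ℤ => ‖A (k - i)‖ * (‖B (i - j)‖ * ‖Y j‖) :=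
      (summable_fiber hB hY i).mul_left _
    refine this.congr fun j => ?_
    rw [hG]; simp [norm_mul, mul_assoc]
  -- step 1 : push A inside the inner tsum
  have step1 : (∑' i : ℤ, A (k - i) * ∑' j : ℤ, B (i - j) * Y j)
      = ∑' i : ℤ, ∑' j : ℤ, G (i, j) := by
    refine tsum_congr fun i => ?_
    rw [← tsum_mul_left]
  -- step 2 : swap to full product sum, then group by j
  have step2 : (∑' i : ℤ, ∑' j : ℤ, G (i, j)) = ∑' j : ℤ, ∑' i : ℤ, G (i, j) := by
    refine Summable.tsum_comm' (f := fun j i => G (i, j)) hGsum.prod_symm ?_ hfib1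
    exact fun j => (hGsum.prod_symm.prod_factor j).congr fun i => rfl
  -- step 3 : inner sum over i is the delta kernel
  have step3 : ∀ j : ℤ, (∑' i : ℤ, G (i, j)) = (if k - j = 0 then 1 else 0) * Y j := by
    intro j
    have hre := Equiv.tsum_eq (α := ℂ) (Equiv.addRight j) (fun i => A (k - i) * B (i - j) * Y j)
    have : (∑' i : ℤ, G (i, j)) = ∑' i : ℤ, A (k - i) * B (i - j) * Y j := by
      refine tsum_congr fun i => ?_
      rw [hG]; ring
    rw [this, ← hre]
    have : ∀ i : ℤ, A (k - (i + j)) * B (i + j - j) * Y j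
        = A ((k - j) - i) * B i * Y j := by
      intro i; congr 2 <;> [skip; congr 1] <;> ring_nf
    simp only [Equiv.coe_addRight, this]
    rw [tsum_mul_right, hAB (k - j)]
  rw [step1, step2]
  simp only [step3]
  rw [tsum_eq_single k]
  · simp
  · intro j hj
    have : k - j ≠ 0 := sub_ne_zero.mpr (Ne.symm hj)
    simp [this]

/-- If `F{Q}` never vanishes and `δt²/F{Q}` is the DTFT of an absolutely
summable `Qinv`, then convolution with `Qinv` inverts convolution with `Q`. -/
theorem stmt_17 {p : ℕ} (δt : ℝ) (hδt : 0 < δt) (Q Qinv : ℤ → ℂ)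
    (hQ : Summable fun k : ℤ => ‖Q k‖)
    (hQ0 : ∀ f : ℝ, dtft δt Q f ≠ 0)
    (hQinv : Summable fun k : ℤ => ‖Qinv k‖)
    (hinv : ∀ f : ℝ, dtft δt Qinv f = (δt : ℂ) ^ 2 / dtft δt Q f)
    (X : ℤ → Fin p → ℂ) (hX : ∀ l, Summable fun k : ℤ => ‖X k l‖) :
    (∀ (k : ℤ) (l : Fin p),
        (∑' i : ℤ, Qinv (k - i) * ∑' j : ℤ, Q (i - j) * X j l) = X k l) ∧
    (∀ (k : ℤ) (l : Fin p),
        (∑' i : ℤ, Q (k - i) * ∑' j : ℤ, Qinv (i - j) * X j l) = X k l) := by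
  have hδtC : (δt : ℂ) ≠ 0 := by exact_mod_cast hδt.ne'
  -- product of the two DTFT sums is 1
  have hone : ∀ f : ℝ,
      (∑' i : ℤ, Qinv i * cexp (i * f * δt)) * (∑' j : ℤ, Q j * cexp (j * f * δt)) = 1 := by
    intro f
    have h1 : dtft δt Qinv f * dtft δt Q f = (δt : ℂ) ^ 2 := by
      rw [hinv f, div_mul_cancel₀ _ (hQ0 f)]
    rw [dtft, dtft] at h1
    have h2 : (δt : ℂ) ^ 2 *
        ((∑' i : ℤ, Qinv i * cexp (i * f * δt)) * (∑' j : ℤ, Q j * cexp (j * f * δt)))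
        = (δt : ℂ) ^ 2 * 1 := by
      rw [mul_one]; linear_combination h1
    exact mul_left_cancel₀ (pow_ne_zero 2 hδtC) h2
  -- the convolution kernel is a Kronecker delta
  have hC : ∀ k : ℤ, (∑' i : ℤ, Qinv (k - i) * Q i) = if k = 0 then 1 else 0 := by
    refine dirac_of_const hδt _ (summable_conv_norm hQinv hQ) 1 ?_
    intro f
    rw [← cauchyProductDTFT hQinv hQ δt f]
    exact hone f
  have hC' : ∀ k : ℤ, (∑' i : ℤ, Q (k - i) * Qinv i) = if k = 0 then 1 else 0 := by
    intro k
    rw [conv_comm]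
    exact hC k
  constructor
  · intro k l
    exact apply_conv hQinv hQ hC (fun j => X j l) (hX l) k
  · intro k l
    exact apply_conv hQ hQinv hC' (fun j => X j l) (hX l) k
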